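/- For n > 0, there are exactly four equivalence classes, under the action of Aut(K₄ⁿ × K₄, h^n ⊕ ℓ²), of complex-valued quadratic forms on K₄ⁿ × K₄ with coboundary h^n ⊕ ℓ². For n = 0, there are exactly three. -/

import Mathlib

/-- The Klein four-group. -/
abbrev K4 : Type := ZMod 2 × ZMod 2

/-- The standard hyperbolic pairing on `K₄`, with complex values. -/
noncomputable def hqC (a b : K4) : ℂˣ :=
  (-1 : ℂˣ) ^ (a.1 * b.2 + a.2 * b.1 : ZMod 2).val

/-- The bicharacter `ℓ` on `ℤ/2ℤ` with `ℓ(g,g) = -1`, complex values. -/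
noncomputable def ellC (a b : ZMod 2) : ℂˣ := (-1 : ℂˣ) ^ (a * b : ZMod 2).val

/-- The bicharacter `h^n ⊕ ℓ²` on `K₄ⁿ × K₄`. -/
noncomputable def chiHL (n : ℕ) (x y : (Fin n → K4) × K4) : ℂˣ :=
  (∏ i, hqC (x.1 i) (y.1 i)) * ellC x.2.1 y.2.1 * ellC x.2.2 y.2.2

/-- `σ` is a complex quadratic form with coboundary `h^n ⊕ ℓ²`. -/
def AdmHL (n : ℕ) (σ : (Fin n → K4) × K4 → ℂˣ) : Prop :=
  ∀ x y, σ (x + y) = σ x * σ y * chiHL n x y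

/-- Two forms are equivalent if related by an automorphism preserving the
bicharacter `h^n ⊕ ℓ²`. -/
def EquivHL (n : ℕ) (σ σ' : (Fin n → K4) × K4 → ℂˣ) : Prop :=
  ∃ f : ((Fin n → K4) × K4) ≃+ ((Fin n → K4) × K4),
    (∀ x y, chiHL n (f x) (f y) = chiHL n x y) ∧ ∀ x, σ' (f x) = σ x

namespace S11

abbrev G (n : ℕ) := (Fin n → K4) × K4

lemma z2cases (u : ZMod 2) : u = 0 ∨ u = 1 := by revert u; decide

lemma e_add (u v : ZMod 2) :
    (-1 : ℂˣ) ^ (u + v).val = (-1 : ℂˣ) ^ u.val * (-1 : ℂˣ) ^ v.val := by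
  rcases z2cases u with rfl | rfl <;> rcases z2cases v with rfl | rfl <;>
    simp only [show ((0:ZMod 2)+0).val = 0 from rfl, show ((0:ZMod 2)+1).val = 1 from rfl,
      show ((1:ZMod 2)+0).val = 1 from rfl, show ((1:ZMod 2)+1).val = 0 from rfl,
      show (0:ZMod 2).val = 0 from rfl, show (1:ZMod 2).val = 1 from rfl,
      pow_zero, pow_one, mul_one, one_mul] <;> simp

lemma e_sum {ι : Type*} (s : Finset ι) (g : ι → ZMod 2) :
    (-1 : ℂˣ) ^ (∑ i ∈ s, g i).val = ∏ i ∈ s, (-1 : ℂˣ) ^ (g i).val := by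
  classical
  induction s using Finset.cons_induction with
  | empty => rw [Finset.sum_empty, Finset.prod_empty]; exact pow_zero _
  | cons a s ha ih => rw [Finset.sum_cons, Finset.prod_cons, e_add, ih]

/-- the underlying ZMod 2 bilinear form -/
def bf (n : ℕ) (x y : G n) : ZMod 2 :=
  (∑ i, ((x.1 i).1 * (y.1 i).2 + (x.1 i).2 * (y.1 i).1)) + x.2.1 * y.2.1 + x.2.2 * y.2.2

lemma chi_eq (n : ℕ) (x y : G n) : chiHL n x y = (-1 : ℂˣ) ^ (bf n x y).val := by
  rw [bf, chiHL, e_add, e_add, e_sum]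
  rfl

lemma bf_symm (n : ℕ) (x y : G n) : bf n x y = bf n y x := by
  unfold bf
  congr 1
  · congr 1
    · exact Finset.sum_congr rfl fun i _ => by ring
    · ring
  · ring

lemma bf_add_left (n : ℕ) (x y z : G n) : bf n (x + y) z = bf n x z + bf n y z := by
  unfold bf
  simp only [Prod.fst_add, Prod.snd_add, Pi.add_apply]
  have h : ∀ i : Fin n, ((x.1 i).1 + (y.1 i).1) * (z.1 i).2 + ((x.1 i).2 + (y.1 i).2) * (z.1 i).1
      = ((x.1 i).1 * (z.1 i).2 + (x.1 i).2 * (z.1 i).1)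
        + ((y.1 i).1 * (z.1 i).2 + (y.1 i).2 * (z.1 i).1) := fun i => by ring
  rw [Finset.sum_congr rfl fun i _ => h i, Finset.sum_add_distrib]
  ring

lemma bf_add_right (n : ℕ) (x y z : G n) : bf n x (y + z) = bf n x y + bf n x z := by
  rw [bf_symm, bf_add_left, bf_symm n y x, bf_symm n z x]

lemma bf_zero_left (n : ℕ) (y : G n) : bf n 0 y = 0 := by
  unfold bf; simp

lemma bf_zero_right (n : ℕ) (x : G n) : bf n x 0 = 0 := by
  rw [bf_symm, bf_zero_left]


variable {n : ℕ} {σ σ' : G n → ℂˣ}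

lemma two_torsion (x : G n) : x + x = 0 := by
  have h2 : ∀ u : ZMod 2, u + u = 0 := by decide
  exact Prod.ext (funext fun i => Prod.ext (h2 _) (h2 _)) (Prod.ext (h2 _) (h2 _))

lemma chi_zero_left (y : G n) : chiHL n 0 y = 1 := by
  rw [chi_eq, bf_zero_left]; rfl

lemma adm_zero (h : AdmHL n σ) : σ 0 = 1 := by
  have h0 := h 0 0
  rw [add_zero, chi_zero_left, mul_one] at h0
  exact mul_eq_left.mp h0.symm

lemma adm_sq (h : AdmHL n σ) (x : G n) : σ x * σ x * chiHL n x x = 1 := by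
  have hx := h x x
  rw [two_torsion, adm_zero h] at hx
  exact hx.symm

noncomputable def tw (σ : G n → ℂˣ) (d : G n) : G n → ℂˣ := fun x => σ x * chiHL n d x

lemma adm_tw (h : AdmHL n σ) (d : G n) : AdmHL n (tw σ d) := by
  intro x y
  unfold tw
  rw [h x y, chi_eq n d (x+y), bf_add_right, e_add, ← chi_eq, ← chi_eq]
  simp only [mul_comm, mul_assoc, mul_left_comm]

lemma neg_one_pow_one_ne : ((-1 : ℂˣ) ^ (1 : ZMod 2).val : ℂˣ) ≠ 1 := by
  show ((-1 : ℂˣ) ^ (1 : ℕ)) ≠ 1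
  intro hc
  rw [pow_one] at hc
  have h1 : (-1 : ℂ) = 1 := by
    have h2 := congrArg Units.val hc
    simpa using h2
  norm_num at h1

lemma equiv_tw (h : AdmHL n σ) (d : G n) (hd : σ d = 1) : EquivHL n σ (tw σ d) := by
  have hsq := adm_sq h d
  rw [hd, one_mul, one_mul] at hsq
  have hbdd : bf n d d = 0 := by
    rcases z2cases (bf n d d) with h0 | h1
    · exact h0
    · exact absurd hsq (by rw [chi_eq, h1]; exact neg_one_pow_one_ne)
  set f : G n → G n := fun x => if bf n d x = 1 then x + d else x with hf
  have f0 : ∀ x : G n, bf n d x = 0 → f x = x := by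
    intro x hx
    simp only [hf]
    rw [if_neg (by rw [hx]; decide)]
  have f1 : ∀ x : G n, bf n d x = 1 → f x = x + d := by
    intro x hx
    simp only [hf]
    rw [if_pos hx]
  have hinv : Function.Involutive f := by
    intro x
    rcases z2cases (bf n d x) with hx | hx
    · rw [f0 x hx, f0 x hx]
    · rw [f1 x hx, f1 (x + d) (by rw [bf_add_right, hbdd, add_zero, hx]),
        add_assoc, two_torsion, add_zero]
  have hadd : ∀ x y : G n, f (x + y) = f x + f y := by
    intro x y
    have hb : bf n d (x + y) = bf n d x + bf n d y := bf_add_right n d x y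
    rcases z2cases (bf n d x) with hx | hx <;> rcases z2cases (bf n d y) with hy | hy
    · rw [f0 x hx, f0 y hy, f0 _ (by rw [hb, hx, hy]; decide)]
    · rw [f0 x hx, f1 y hy, f1 _ (by rw [hb, hx, hy]; decide), add_assoc]
    · rw [f1 x hx, f0 y hy, f1 _ (by rw [hb, hx, hy]; decide)]
      abel
    · rw [f1 x hx, f1 y hy, f0 _ (by rw [hb, hx, hy]; decide)]
      have : x + d + (y + d) = x + y + (d + d) := by abel
      rw [this, two_torsion, add_zero]
  have hbff : ∀ x y : G n, bf n (f x) (f y) = bf n x y := by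
    intro x y
    rcases z2cases (bf n d x) with hx | hx <;> rcases z2cases (bf n d y) with hy | hy
    · rw [f0 x hx, f0 y hy]
    · rw [f0 x hx, f1 y hy, bf_add_right, bf_symm n x d, hx, add_zero]
    · rw [f1 x hx, f0 y hy, bf_add_left, hy, add_zero]
    · rw [f1 x hx, f1 y hy, bf_add_left, bf_add_right, bf_add_right,
        bf_symm n x d, hx, hbdd, hy]
      have h2 : ∀ u : ZMod 2, u + 1 + (1 + 0) = u := by decide
      exact h2 _
  refine ⟨AddEquiv.mk' (hinv.toPerm f) hadd, ?_, ?_⟩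
  · intro x y
    rw [chi_eq, chi_eq]
    show ((-1:ℂˣ)) ^ (bf n (f x) (f y)).val = _
    rw [hbff]
  · intro x
    show tw σ d (f x) = σ x
    unfold tw
    rcases z2cases (bf n d x) with hx | hx
    · rw [f0 x hx, chi_eq, hx]
      show σ x * (-1:ℂˣ) ^ (0:ℕ) = σ x
      rw [pow_zero, mul_one]
    · rw [f1 x hx, h x d, hd, mul_one, chi_eq n d, bf_add_right, hbdd, add_zero, hx,
        chi_eq n x d, bf_symm n x d, hx]
      show σ x * (-1:ℂˣ) ^ (1:ℕ) * (-1:ℂˣ) ^ (1:ℕ) = σ x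
      rw [pow_one]
      simp


def e1 (n : ℕ) (i : Fin n) : G n := (Pi.single i ((1:ZMod 2), (0:ZMod 2)), 0)
def e2 (n : ℕ) (i : Fin n) : G n := (Pi.single i ((0:ZMod 2), (1:ZMod 2)), 0)
def fv1 (n : ℕ) : G n := (0, (1, 0))
def fv2 (n : ℕ) : G n := (0, (0, 1))

def bfhom (n : ℕ) (d : G n) : G n →+ ZMod 2 where
  toFun := bf n d
  map_zero' := bf_zero_right n d
  map_add' := bf_add_right n d

lemma bf_e1 {n : ℕ} (d : G n) (i : Fin n) : bf n d (e1 n i) = (d.1 i).2 := by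
  unfold bf e1
  simp [Pi.single_apply, apply_ite Prod.fst, apply_ite Prod.snd]

lemma bf_e2 {n : ℕ} (d : G n) (i : Fin n) : bf n d (e2 n i) = (d.1 i).1 := by
  unfold bf e2
  simp [Pi.single_apply, apply_ite Prod.fst, apply_ite Prod.snd]

lemma bf_fv1 {n : ℕ} (d : G n) : bf n d (fv1 n) = d.2.1 := by
  unfold bf fv1; simp

lemma bf_fv2 {n : ℕ} (d : G n) : bf n d (fv2 n) = d.2.2 := by
  unfold bf fv2; simp

lemma hom_ext {n : ℕ} (ψ : G n →+ ZMod 2)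
    (h1 : ∀ i, ψ (e1 n i) = 0) (h2 : ∀ i, ψ (e2 n i) = 0)
    (hf1 : ψ (fv1 n) = 0) (hf2 : ψ (fv2 n) = 0) : ∀ x, ψ x = 0 := by
  have hsnd : ∀ k : K4, ψ ((0 : Fin n → K4), k) = 0 := by
    intro k
    have hk : ((0 : Fin n → K4), k) = (((0 : Fin n → K4), (k.1, 0)) : G n) + (0, (0, k.2)) := by
      refine Prod.ext (by simp) (Prod.ext (by simp) (by simp))
    rw [hk, map_add]
    have ha : ψ ((0 : Fin n → K4), (k.1, 0)) = 0 := by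
      rcases z2cases k.1 with hz | hz <;> rw [hz]
      · exact map_zero ψ
      · exact hf1
    have hb : ψ ((0 : Fin n → K4), (0, k.2)) = 0 := by
      rcases z2cases k.2 with hz | hz <;> rw [hz]
      · exact map_zero ψ
      · exact hf2
    rw [ha, hb, add_zero]
  have hfst : ∀ v : Fin n → K4, ψ (v, 0) = 0 := by
    intro v
    have hv : ((v, 0) : G n) = ∑ i, ((Pi.single i (v i), 0) : G n) := by
      refine Prod.ext ?_ ?_
      · rw [Prod.fst_sum]
        simp [Finset.univ_sum_single]
      · rw [Prod.snd_sum]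
        simp
    rw [hv, map_sum]
    refine Finset.sum_eq_zero fun i _ => ?_
    have hval : (v i) = (((v i).1, 0) : K4) + ((0, (v i).2) : K4) :=
      Prod.ext (by simp) (by simp)
    have hsp : ((Pi.single i (v i), 0) : G n)
        = ((Pi.single i (((v i).1, 0) : K4), 0) : G n) + (Pi.single i ((0, (v i).2) : K4), 0) := by
      refine Prod.ext ?_ (by simp)
      show (Pi.single i (v i) : Fin n → K4)
          = Pi.single i (((v i).1, 0) : K4) + Pi.single i ((0, (v i).2) : K4)
      conv_lhs => rw [hval]
      rw [Pi.single_add]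
    rw [hsp, map_add]
    have ha : ψ (Pi.single i (((v i).1, 0) : K4), 0) = 0 := by
      rcases z2cases (v i).1 with hz | hz <;> rw [hz]
      · rw [show (((0:ZMod 2), (0:ZMod 2)) : K4) = 0 from rfl, Pi.single_zero]
        exact map_zero ψ
      · exact h1 i
    have hb : ψ (Pi.single i ((0, (v i).2) : K4), 0) = 0 := by
      rcases z2cases (v i).2 with hz | hz <;> rw [hz]
      · rw [show (((0:ZMod 2), (0:ZMod 2)) : K4) = 0 from rfl, Pi.single_zero]
        exact map_zero ψ
      · exact h2 i
    rw [ha, hb, add_zero]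
  intro x
  have hx : x = ((x.1, 0) : G n) + (0, x.2) := by
    refine Prod.ext (by simp) (by simp)
  rw [hx, map_add, hfst, hsnd, add_zero]

lemma hom_rep {n : ℕ} (φ : G n →+ ZMod 2) : ∃ d : G n, ∀ x, φ x = bf n d x := by
  refine ⟨((fun i => (φ (e2 n i), φ (e1 n i))), (φ (fv1 n), φ (fv2 n))), ?_⟩
  set d : G n := ((fun i => (φ (e2 n i), φ (e1 n i))), (φ (fv1 n), φ (fv2 n))) with hd
  have hz := hom_ext (φ - bfhom n d) ?_ ?_ ?_ ?_
  · intro x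
    have := hz x
    simp only [AddMonoidHom.sub_apply] at this
    have h2 : φ x - bfhom n d x = 0 := this
    have := sub_eq_zero.mp h2
    exact this
  · intro i
    simp only [AddMonoidHom.sub_apply]
    show φ (e1 n i) - bf n d (e1 n i) = 0
    rw [bf_e1]
    simp [hd]
  · intro i
    simp only [AddMonoidHom.sub_apply]
    show φ (e2 n i) - bf n d (e2 n i) = 0
    rw [bf_e2]
    simp [hd]
  · simp only [AddMonoidHom.sub_apply]
    show φ (fv1 n) - bf n d (fv1 n) = 0
    rw [bf_fv1]
    simp [hd]
  · simp only [AddMonoidHom.sub_apply]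
    show φ (fv2 n) - bf n d (fv2 n) = 0
    rw [bf_fv2]
    simp [hd]

lemma one_ne_neg_one : (1 : ℂˣ) ≠ -1 := by
  intro hc
  have h2 := congrArg Units.val hc
  simp at h2
  norm_num at h2

lemma adm_ratio {n : ℕ} {σ σ' : G n → ℂˣ} (h : AdmHL n σ) (h' : AdmHL n σ') :
    ∃ d, ∀ x, σ' x = σ x * chiHL n d x := by
  set τ : G n → ℂˣ := fun x => σ' x * (σ x)⁻¹ with hτ
  have hτsq : ∀ x, τ x * τ x = 1 := by
    intro x
    have hs := adm_sq h x
    have hs' := adm_sq h' x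
    have hss : σ' x * σ' x = σ x * σ x := by
      have := hs.trans hs'.symm
      exact mul_right_cancel this |>.symm
    show σ' x * (σ x)⁻¹ * (σ' x * (σ x)⁻¹) = 1
    rw [mul_mul_mul_comm, hss, mul_mul_mul_comm]
    simp
  have hτ1 : ∀ x, τ x = 1 ∨ τ x = -1 := by
    intro x
    have hc : (τ x : ℂ) * (τ x : ℂ) = 1 := by
      rw [← Units.val_mul, hτsq x, Units.val_one]
    rcases mul_self_eq_one_iff.mp hc with hh | hh
    · left; exact Units.ext hh
    · right
      apply Units.ext
      rw [hh]
      simp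
  have hτmul' : ∀ x y, τ (x + y) = τ x * τ y := by
    intro x y
    show σ' (x+y) * (σ (x+y))⁻¹ = σ' x * (σ x)⁻¹ * (σ' y * (σ y)⁻¹)
    rw [h x y, h' x y]
    apply Units.ext
    simp only [Units.val_mul, Units.val_inv_eq_inv_val]
    field_simp
  have hτ0 : τ 0 = 1 := by
    show σ' 0 * (σ 0)⁻¹ = 1
    rw [adm_zero h, adm_zero h']
    simp
  have e_inj : ∀ u v : ZMod 2, (-1:ℂˣ)^u.val = (-1:ℂˣ)^v.val → u = v := by
    intro u v
    rcases z2cases u with rfl | rfl <;> rcases z2cases v with rfl | rfl <;> intro he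
    · rfl
    · exfalso
      rw [show ((0:ZMod 2)).val = 0 from rfl, pow_zero,
        show ((1:ZMod 2)).val = 1 from rfl, pow_one] at he
      exact one_ne_neg_one he
    · exfalso
      rw [show ((1:ZMod 2)).val = 1 from rfl, pow_one,
        show ((0:ZMod 2)).val = 0 from rfl, pow_zero] at he
      exact one_ne_neg_one he.symm
    · rfl
  set φ : G n → ZMod 2 := fun x => if τ x = 1 then 0 else 1 with hφ
  have hφe : ∀ x, τ x = (-1 : ℂˣ) ^ (φ x).val := by
    intro x
    rcases hτ1 x with h1 | h1
    · simp only [hφ]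
      rw [if_pos h1, h1, show ((0:ZMod 2)).val = 0 from rfl, pow_zero]
    · simp only [hφ]
      rw [if_neg (by rw [h1]; exact fun hc => one_ne_neg_one hc.symm), h1,
        show ((1:ZMod 2)).val = 1 from rfl, pow_one]
  have hφ0 : φ 0 = 0 := by
    simp only [hφ]
    rw [if_pos hτ0]
  have hφadd : ∀ x y, φ (x + y) = φ x + φ y := by
    intro x y
    apply e_inj
    rw [← hφe, hτmul', hφe x, hφe y, ← e_add]
  obtain ⟨d, hd⟩ := hom_rep ⟨⟨φ, hφ0⟩, hφadd⟩
  refine ⟨d, fun x => ?_⟩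
  have hdx : φ x = bf n d x := hd x
  rw [chi_eq, ← hdx, ← hφe x, hτ]
  rw [mul_comm (σ x) _, mul_assoc, inv_mul_cancel, mul_one]


noncomputable def iU : ℂˣ :=
  ⟨Complex.I, -Complex.I, by simp [Complex.I_mul_I], by simp [Complex.I_mul_I]⟩

lemma iU_val : (iU : ℂ) = Complex.I := rfl

lemma iU_sq : iU * iU = -1 := by
  apply Units.ext
  simp [iU, Complex.I_mul_I]

noncomputable def σ0 (n : ℕ) : G n → ℂˣ := fun x =>
  (-1:ℂˣ) ^ ((∑ i, (x.1 i).1 * (x.1 i).2 : ZMod 2)).val * iU ^ (x.2.1.val) * iU ^ (x.2.2.val)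

lemma v0 : ((0:ZMod 2)).val = 0 := rfl
lemma v1 : ((1:ZMod 2)).val = 1 := rfl

lemma iU_add (u v : ZMod 2) :
    iU ^ ((u + v).val) = iU ^ u.val * iU ^ v.val * (-1:ℂˣ) ^ ((u * v).val) := by
  rcases z2cases u with rfl | rfl <;> rcases z2cases v with rfl | rfl
  · rw [show ((0:ZMod 2)+0) = 0 from by decide, show ((0:ZMod 2)*0) = 0 from by decide,
      v0, pow_zero, pow_zero, mul_one, mul_one]
  · rw [show ((0:ZMod 2)+1) = 1 from by decide, show ((0:ZMod 2)*1) = 0 from by decide,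
      v0, v1, pow_zero, pow_zero, one_mul, mul_one]
  · rw [show ((1:ZMod 2)+0) = 1 from by decide, show ((1:ZMod 2)*0) = 0 from by decide,
      v0, v1, pow_zero, pow_zero, mul_one, mul_one]
  · rw [show ((1:ZMod 2)+1) = 0 from by decide, show ((1:ZMod 2)*1) = 1 from by decide,
      v0, v1, pow_zero, pow_one, pow_one, iU_sq]
    simp

lemma adm_σ0 (n : ℕ) : AdmHL n (σ0 n) := by
  intro x y
  unfold σ0 chiHL
  have hsum : (∑ i, ((x+y).1 i).1 * ((x+y).1 i).2 : ZMod 2)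
      = (∑ i, (x.1 i).1 * (x.1 i).2) + (∑ i, (y.1 i).1 * (y.1 i).2)
        + (∑ i, ((x.1 i).1 * (y.1 i).2 + (x.1 i).2 * (y.1 i).1)) := by
    rw [← Finset.sum_add_distrib, ← Finset.sum_add_distrib]
    refine Finset.sum_congr rfl fun i _ => ?_
    show ((x.1 i).1 + (y.1 i).1) * ((x.1 i).2 + (y.1 i).2) = _
    ring
  have hprod : (∏ i, hqC (x.1 i) (y.1 i))
      = (-1:ℂˣ) ^ ((∑ i, ((x.1 i).1 * (y.1 i).2 + (x.1 i).2 * (y.1 i).1) : ZMod 2)).val := by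
    rw [e_sum]
    rfl
  rw [hsum, e_add, e_add, hprod,
    show (x+y).2.1 = x.2.1 + y.2.1 from rfl, show (x+y).2.2 = x.2.2 + y.2.2 from rfl,
    iU_add x.2.1 y.2.1, iU_add x.2.2 y.2.2]
  unfold ellC
  apply Units.ext
  push_cast
  ring

noncomputable def Gs (n : ℕ) (σ : G n → ℂˣ) : ℂ := ∑ x : G n, (σ x : ℂ)

lemma Gs_equiv {n : ℕ} {σ σ' : G n → ℂˣ} (h : EquivHL n σ σ') : Gs n σ' = Gs n σ := by
  obtain ⟨f, -, hf⟩ := h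
  have := Equiv.sum_comp f.toEquiv (fun x => (σ' x : ℂ))
  rw [Gs, Gs, ← this]
  refine Finset.sum_congr rfl fun x _ => ?_
  show ((σ' (f x) : ℂ)) = σ x
  rw [hf]

lemma Gs_tw {n : ℕ} {σ : G n → ℂˣ} (h : AdmHL n σ) (d : G n) :
    Gs n (tw σ d) * (σ d : ℂ) = Gs n σ := by
  rw [Gs, Finset.sum_mul]
  have key : ∀ x : G n, ((tw σ d x : ℂˣ) : ℂ) * (σ d : ℂ) = ((σ (x + d) : ℂˣ) : ℂ) := by
    intro x
    rw [h x d]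
    show ((σ x * chiHL n d x : ℂˣ) : ℂ) * _ = _
    rw [chi_eq n d x, bf_symm n d x, ← chi_eq n x d]
    push_cast
    ring
  rw [Finset.sum_congr rfl fun x _ => key x]
  exact Fintype.sum_equiv (Equiv.addRight d) _ _ (fun x => rfl)

lemma sum_zmod2 (f : ZMod 2 → ℂ) : (∑ u : ZMod 2, f u) = f 0 + f 1 := by
  rw [show (Finset.univ : Finset (ZMod 2)) = {0, 1} from by decide]
  rw [Finset.sum_pair (by decide)]

lemma e_addC (u v : ZMod 2) :
    (-1:ℂ) ^ (u + v).val = (-1:ℂ) ^ u.val * (-1:ℂ) ^ v.val := by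
  rcases z2cases u with rfl | rfl <;> rcases z2cases v with rfl | rfl
  · rw [show ((0:ZMod 2)+0) = 0 from by decide]; norm_num
  · rw [show ((0:ZMod 2)+1) = 1 from by decide]; norm_num
  · rw [show ((1:ZMod 2)+0) = 1 from by decide]; norm_num
  · rw [show ((1:ZMod 2)+1) = 0 from by decide, v0, v1, pow_zero, pow_one]; norm_num

lemma e_sumC {ι : Type*} (s : Finset ι) (g : ι → ZMod 2) :
    (-1 : ℂ) ^ (∑ i ∈ s, g i).val = ∏ i ∈ s, (-1 : ℂ) ^ (g i).val := by
  classical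
  induction s using Finset.cons_induction with
  | empty => norm_num
  | cons a s ha ih => rw [Finset.sum_cons, Finset.prod_cons, e_addC, ih]

lemma sum_I : (∑ a : ZMod 2, (Complex.I) ^ a.val) = 1 + Complex.I := by
  rw [sum_zmod2, v0, v1, pow_zero, pow_one]

lemma sum_K4 : (∑ a : K4, (-1:ℂ) ^ ((a.1 * a.2 : ZMod 2)).val) = 2 := by
  rw [Fintype.sum_prod_type, sum_zmod2 (fun u => ∑ w : ZMod 2, (-1:ℂ) ^ ((u * w : ZMod 2)).val)]
  rw [sum_zmod2 (fun w => (-1:ℂ) ^ (((0:ZMod 2) * w : ZMod 2)).val),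
    sum_zmod2 (fun w => (-1:ℂ) ^ (((1:ZMod 2) * w : ZMod 2)).val)]
  rw [show ((0:ZMod 2)*0) = 0 from by decide, show ((0:ZMod 2)*1) = 0 from by decide,
    show ((1:ZMod 2)*0) = 0 from by decide, show ((1:ZMod 2)*1) = 1 from by decide,
    v0, v1, pow_zero, pow_one]
  norm_num

lemma Gs_σ0 (n : ℕ) : Gs n (σ0 n) = (2:ℂ)^n * ((1 + Complex.I) * (1 + Complex.I)) := by
  have hfac : Gs n (σ0 n)
      = (∑ v : Fin n → K4, (-1:ℂ) ^ ((∑ i, (v i).1 * (v i).2 : ZMod 2)).val)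
        * ((∑ a : ZMod 2, (Complex.I) ^ a.val) * (∑ b : ZMod 2, (Complex.I) ^ b.val)) := by
    rw [Gs, Fintype.sum_prod_type, Finset.sum_mul]
    refine Finset.sum_congr rfl fun v _ => ?_
    rw [Fintype.sum_prod_type, Finset.sum_mul_sum, Finset.mul_sum]
    refine Finset.sum_congr rfl fun a _ => ?_
    rw [Finset.mul_sum]
    refine Finset.sum_congr rfl fun b _ => ?_
    show (((-1:ℂˣ) ^ ((∑ i, (v i).1 * (v i).2 : ZMod 2)).val * iU ^ a.val * iU ^ b.val : ℂˣ) : ℂ) = _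
    push_cast [iU_val]
    ring
  rw [hfac, sum_I]
  have hA : (∑ v : Fin n → K4, (-1:ℂ) ^ ((∑ i, (v i).1 * (v i).2 : ZMod 2)).val) = (2:ℂ)^n := by
    have h1 : ∀ v : Fin n → K4, (-1:ℂ) ^ ((∑ i, (v i).1 * (v i).2 : ZMod 2)).val
        = ∏ i, (-1:ℂ) ^ (((v i).1 * (v i).2 : ZMod 2)).val := fun v => e_sumC _ _
    rw [Finset.sum_congr rfl fun v _ => h1 v]
    rw [← Fintype.prod_sum (fun (_ : Fin n) (a : K4) => (-1:ℂ) ^ ((a.1 * a.2 : ZMod 2)).val)]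
    rw [Finset.prod_congr rfl fun i _ => sum_K4]
    rw [Finset.prod_const, Finset.card_univ, Fintype.card_fin]
  rw [hA]


lemma σ0_fourth {n : ℕ} (d : G n) :
    σ0 n d * σ0 n d * (σ0 n d * σ0 n d) = 1 := by
  have hs := adm_sq (adm_σ0 n) d
  have h2 : σ0 n d * σ0 n d = (chiHL n d d)⁻¹ := eq_inv_of_mul_eq_one_left hs
  rw [h2, ← mul_inv, chi_eq, ← mul_pow]
  norm_num

lemma fourth_roots (u : ℂˣ) (h : u * u * (u * u) = 1) :
    u = 1 ∨ u = -1 ∨ u = iU ∨ u = -iU := by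
  have hc : ((u:ℂ)) * u * ((u:ℂ) * u) = 1 := by
    have h2 := congrArg Units.val h
    simpa only [Units.val_mul, Units.val_one] using h2
  rcases mul_self_eq_one_iff.mp hc with h2 | h2
  · rcases mul_self_eq_one_iff.mp h2 with h1 | h1
    · exact Or.inl (Units.ext h1)
    · refine Or.inr (Or.inl (Units.ext ?_))
      rw [h1]; simp
  · have hz : ((u:ℂ) - Complex.I) * ((u:ℂ) + Complex.I) = 0 := by
      linear_combination h2 - Complex.I_sq
    rcases mul_eq_zero.mp hz with hz | hz
    · refine Or.inr (Or.inr (Or.inl (Units.ext ?_)))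
      rw [iU_val]
      exact sub_eq_zero.mp hz
    · refine Or.inr (Or.inr (Or.inr (Units.ext ?_)))
      rw [Units.val_neg, iU_val]
      exact eq_neg_of_add_eq_zero_left hz

lemma Gs_σ0_ne (n : ℕ) : Gs n (σ0 n) ≠ 0 := by
  rw [Gs_σ0]
  have hI : (1 + Complex.I) ≠ 0 := by
    intro hc
    have := congrArg Complex.im hc
    simp at this
  exact mul_ne_zero (pow_ne_zero n two_ne_zero) (mul_ne_zero hI hI)

lemma classification {n : ℕ} {m : ℕ} (c : Fin m → G n)
    (hinj : ∀ i j : Fin m, ((σ0 n (c i) : ℂˣ) : ℂ) = ((σ0 n (c j) : ℂˣ) : ℂ) → i = j)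
    (hcov : ∀ d : G n, ∃ i, σ0 n (c i) = σ0 n d) :
    (∀ i, AdmHL n (tw (σ0 n) (c i))) ∧
    (∀ i j, EquivHL n (tw (σ0 n) (c i)) (tw (σ0 n) (c j)) → i = j) ∧
    (∀ σ, AdmHL n σ → ∃ i, EquivHL n σ (tw (σ0 n) (c i))) := by
  have hGsS : ∀ i, Gs n (tw (σ0 n) (c i)) * ((σ0 n (c i) : ℂˣ) : ℂ) = Gs n (σ0 n) :=
    fun i => Gs_tw (adm_σ0 n) (c i)
  have hGsSne : ∀ i, Gs n (tw (σ0 n) (c i)) ≠ 0 := by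
    intro i hc
    apply Gs_σ0_ne n
    rw [← hGsS i, hc, zero_mul]
  refine ⟨fun i => adm_tw (adm_σ0 n) (c i), ?_, ?_⟩
  · intro i j hEq
    have hGs : Gs n (tw (σ0 n) (c j)) = Gs n (tw (σ0 n) (c i)) := Gs_equiv hEq
    apply hinj
    have h1 := hGsS i
    have h2 := hGsS j
    rw [hGs] at h2
    exact mul_left_cancel₀ (hGsSne i) (h1.trans h2.symm)
  · intro σ hσ
    obtain ⟨d, hd⟩ := adm_ratio (adm_σ0 n) hσ
    have hσtw : σ = tw (σ0 n) d := funext hd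
    obtain ⟨i, hi⟩ := hcov d
    have hGd : Gs n σ * ((σ0 n d : ℂˣ) : ℂ) = Gs n (σ0 n) := by
      rw [hσtw]; exact Gs_tw (adm_σ0 n) d
    have hGi : Gs n (tw (σ0 n) (c i)) * ((σ0 n d : ℂˣ) : ℂ) = Gs n (σ0 n) := by
      rw [← hi]; exact hGsS i
    have hGeq : Gs n (tw (σ0 n) (c i)) = Gs n σ :=
      mul_right_cancel₀ (Units.ne_zero _) (hGi.trans hGd.symm)
    have hσne : Gs n σ ≠ 0 := by rw [← hGeq]; exact hGsSne i
    obtain ⟨d', hd'⟩ := adm_ratio hσ (adm_tw (adm_σ0 n) (c i))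
    have htw' : tw (σ0 n) (c i) = tw σ d' := funext hd'
    have hGs' : Gs n (tw σ d') * ((σ d' : ℂˣ) : ℂ) = Gs n σ := Gs_tw hσ d'
    rw [← htw', hGeq] at hGs'
    have hσd' : σ d' = 1 := by
      apply Units.ext
      have := mul_left_cancel₀ hσne (hGs'.trans (mul_one (Gs n σ)).symm)
      simpa using this
    refine ⟨i, ?_⟩
    rw [htw']
    exact equiv_tw hσ d' hσd'

lemma inj4 {α : Type*} {f : Fin 4 → α} {a0 a1 a2 a3 : α}
    (h0 : f 0 = a0) (h1 : f 1 = a1) (h2 : f 2 = a2) (h3 : f 3 = a3)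
    (d01 : a0 ≠ a1) (d02 : a0 ≠ a2) (d03 : a0 ≠ a3)
    (d12 : a1 ≠ a2) (d13 : a1 ≠ a3) (d23 : a2 ≠ a3) :
    ∀ i j : Fin 4, f i = f j → i = j := by
  intro i j hf
  fin_cases i <;> fin_cases j <;>
    first
      | rfl
      | exact absurd ((h0.symm.trans hf).trans h1) d01
      | exact absurd ((h0.symm.trans hf).trans h2) d02
      | exact absurd ((h0.symm.trans hf).trans h3) d03
      | exact absurd ((h1.symm.trans hf).trans h2) d12
      | exact absurd ((h1.symm.trans hf).trans h3) d13
      | exact absurd ((h2.symm.trans hf).trans h3) d23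
      | exact absurd ((h0.symm.trans hf.symm).trans h1) d01
      | exact absurd ((h0.symm.trans hf.symm).trans h2) d02
      | exact absurd ((h0.symm.trans hf.symm).trans h3) d03
      | exact absurd ((h1.symm.trans hf.symm).trans h2) d12
      | exact absurd ((h1.symm.trans hf.symm).trans h3) d13
      | exact absurd ((h2.symm.trans hf.symm).trans h3) d23

lemma inj3 {α : Type*} {f : Fin 3 → α} {a0 a1 a2 : α}
    (h0 : f 0 = a0) (h1 : f 1 = a1) (h2 : f 2 = a2)
    (d01 : a0 ≠ a1) (d02 : a0 ≠ a2) (d12 : a1 ≠ a2) :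
    ∀ i j : Fin 3, f i = f j → i = j := by
  intro i j hf
  fin_cases i <;> fin_cases j <;>
    first
      | rfl
      | exact absurd ((h0.symm.trans hf).trans h1) d01
      | exact absurd ((h0.symm.trans hf).trans h2) d02
      | exact absurd ((h1.symm.trans hf).trans h2) d12
      | exact absurd ((h0.symm.trans hf.symm).trans h1) d01
      | exact absurd ((h0.symm.trans hf.symm).trans h2) d02
      | exact absurd ((h1.symm.trans hf.symm).trans h2) d12

lemma σ0_pair (n : ℕ) (k : K4) :
    σ0 n ((0 : Fin n → K4), k) = iU ^ k.1.val * iU ^ k.2.val := by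
  unfold σ0
  rw [show (∑ i : Fin n, (((0:Fin n → K4)) i).1 * (((0:Fin n → K4)) i).2 : ZMod 2) = 0
      from by simp, v0, pow_zero, one_mul]

lemma σ0_single (n : ℕ) (i0 : Fin n) :
    σ0 n ((Pi.single i0 ((1:ZMod 2), (1:ZMod 2)) : Fin n → K4),
      ((1:ZMod 2), (0:ZMod 2))) = -iU := by
  unfold σ0
  have hs : (∑ i, ((Pi.single i0 ((1:ZMod 2),(1:ZMod 2)) : Fin n → K4) i).1
      * ((Pi.single i0 ((1:ZMod 2),(1:ZMod 2)) : Fin n → K4) i).2 : ZMod 2) = 1 := by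
    simp [Pi.single_apply, apply_ite Prod.fst, apply_ite Prod.snd]
  rw [hs]
  show (-1:ℂˣ) ^ (1:ZMod 2).val * iU ^ (1:ZMod 2).val * iU ^ (0:ZMod 2).val = -iU
  rw [v0, v1, pow_one, pow_one, pow_zero, mul_one, neg_one_mul]

end S11

open S11 in
/-- For `n > 0` there are exactly four equivalence classes of complex quadratic
forms on `K₄ⁿ × K₄` with coboundary `h^n ⊕ ℓ²`; for `n = 0` exactly three. -/
theorem stmt11 (n : ℕ) :
    (0 < n → ∃ S : Fin 4 → ((Fin n → K4) × K4 → ℂˣ),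
      (∀ i, AdmHL n (S i)) ∧
      (∀ i j, EquivHL n (S i) (S j) → i = j) ∧
      (∀ σ, AdmHL n σ → ∃ i, EquivHL n σ (S i))) ∧
    (n = 0 → ∃ S : Fin 3 → ((Fin n → K4) × K4 → ℂˣ),
      (∀ i, AdmHL n (S i)) ∧
      (∀ i j, EquivHL n (S i) (S j) → i = j) ∧
      (∀ σ, AdmHL n σ → ∃ i, EquivHL n σ (S i))) := by
  constructor
  · intro hn
    set i0 : Fin n := ⟨0, hn⟩ with hi0
    set c : Fin 4 → G n := fun i =>
      if i = 0 then 0 else if i = 1 then ((0 : Fin n → K4), ((1:ZMod 2), (0:ZMod 2)))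
      else if i = 2 then ((0 : Fin n → K4), ((1:ZMod 2), (1:ZMod 2)))
      else ((Pi.single i0 ((1:ZMod 2), (1:ZMod 2)) : Fin n → K4), ((1:ZMod 2), (0:ZMod 2)))
      with hc
    have hc0 : c 0 = 0 := rfl
    have hc1 : c 1 = ((0 : Fin n → K4), ((1:ZMod 2), (0:ZMod 2))) := rfl
    have hc2 : c 2 = ((0 : Fin n → K4), ((1:ZMod 2), (1:ZMod 2))) := rfl
    have hc3 : c 3 = ((Pi.single i0 ((1:ZMod 2), (1:ZMod 2)) : Fin n → K4),
      ((1:ZMod 2), (0:ZMod 2))) := rfl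
    have hv0 : σ0 n (c 0) = 1 := by
      rw [hc0]; exact adm_zero (adm_σ0 n)
    have hv1 : σ0 n (c 1) = iU := by
      rw [hc1, σ0_pair, v0, v1, pow_one, pow_zero, mul_one]
    have hv2 : σ0 n (c 2) = -1 := by
      rw [hc2, σ0_pair, v1, pow_one, iU_sq]
    have hv3 : σ0 n (c 3) = -iU := by
      rw [hc3]; exact σ0_single n i0
    have hIC : (iU : ℂ) = Complex.I := rfl
    have w0 : ((σ0 n (c 0) : ℂˣ) : ℂ) = 1 := by rw [hv0]; simp
    have w1 : ((σ0 n (c 1) : ℂˣ) : ℂ) = Complex.I := by rw [hv1]; exact hIC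
    have w2 : ((σ0 n (c 2) : ℂˣ) : ℂ) = -1 := by rw [hv2]; simp
    have w3 : ((σ0 n (c 3) : ℂˣ) : ℂ) = -Complex.I := by
      rw [hv3, Units.val_neg, hIC]
    have hinj : ∀ i j : Fin 4, ((σ0 n (c i) : ℂˣ) : ℂ) = ((σ0 n (c j) : ℂˣ) : ℂ) → i = j :=
      inj4 w0 w1 w2 w3 (by norm_num [Complex.ext_iff]) (by norm_num [Complex.ext_iff])
        (by norm_num [Complex.ext_iff]) (by norm_num [Complex.ext_iff])
        (by norm_num [Complex.ext_iff]) (by norm_num [Complex.ext_iff])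
    have hcov : ∀ d : G n, ∃ i, σ0 n (c i) = σ0 n d := by
      intro d
      rcases fourth_roots (σ0 n d) (σ0_fourth d) with h | h | h | h
      · exact ⟨0, by rw [hv0, h]⟩
      · exact ⟨2, by rw [hv2, h]⟩
      · exact ⟨1, by rw [hv1, h]⟩
      · exact ⟨3, by rw [hv3, h]⟩
    obtain ⟨h1, h2, h3⟩ := classification c hinj hcov
    exact ⟨fun i => tw (σ0 n) (c i), h1, h2, h3⟩
  · intro h0
    subst h0
    set c : Fin 3 → G 0 := fun i =>
      if i = 0 then 0 else if i = 1 then ((0 : Fin 0 → K4), ((1:ZMod 2), (0:ZMod 2)))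
      else ((0 : Fin 0 → K4), ((1:ZMod 2), (1:ZMod 2)))
      with hc
    have hc0 : c 0 = 0 := rfl
    have hc1 : c 1 = ((0 : Fin 0 → K4), ((1:ZMod 2), (0:ZMod 2))) := rfl
    have hc2 : c 2 = ((0 : Fin 0 → K4), ((1:ZMod 2), (1:ZMod 2))) := rfl
    have hv0 : σ0 0 (c 0) = 1 := by
      rw [hc0]; exact adm_zero (adm_σ0 0)
    have hv1 : σ0 0 (c 1) = iU := by
      rw [hc1, σ0_pair, v0, v1, pow_one, pow_zero, mul_one]
    have hv2 : σ0 0 (c 2) = -1 := by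
      rw [hc2, σ0_pair, v1, pow_one, iU_sq]
    have hIC : (iU : ℂ) = Complex.I := rfl
    have w0 : ((σ0 0 (c 0) : ℂˣ) : ℂ) = 1 := by rw [hv0]; simp
    have w1 : ((σ0 0 (c 1) : ℂˣ) : ℂ) = Complex.I := by rw [hv1]; exact hIC
    have w2 : ((σ0 0 (c 2) : ℂˣ) : ℂ) = -1 := by rw [hv2]; simp
    have hinj : ∀ i j : Fin 3, ((σ0 0 (c i) : ℂˣ) : ℂ) = ((σ0 0 (c j) : ℂˣ) : ℂ) → i = j :=
      inj3 w0 w1 w2 (by norm_num [Complex.ext_iff]) (by norm_num [Complex.ext_iff])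
        (by norm_num [Complex.ext_iff])
    have hcov : ∀ d : G 0, ∃ i, σ0 0 (c i) = σ0 0 d := by
      intro d
      have hd1 : d.1 = 0 := funext fun i => i.elim0
      have hd : d = ((0 : Fin 0 → K4), (d.2.1, d.2.2)) := by
        rw [← hd1]
      rw [hd, σ0_pair]
      rcases z2cases d.2.1 with ha | ha <;> rcases z2cases d.2.2 with hb | hb <;>
        rw [ha, hb]
      · exact ⟨0, by rw [hv0, v0, pow_zero, mul_one]⟩
      · exact ⟨1, by rw [hv1, v0, v1, pow_zero, pow_one, one_mul]⟩
      · exact ⟨1, by rw [hv1, v0, v1, pow_zero, pow_one, mul_one]⟩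
      · exact ⟨2, by rw [hv2, v1, pow_one, iU_sq]⟩
    obtain ⟨h1, h2, h3⟩ := classification c hinj hcov
    exact ⟨fun i => tw (σ0 0) (c i), h1, h2, h3⟩
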